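/- Let F be a field of characteristic ≠ 2, let g be a simple Lie algebra over F and g' any Lie algebra over F, let κ, λ : g → g and κ', λ' : g' → g' be linear maps satisfying condition (kl), and let s ∈ g, s' ∈ g', with associated affine Lie brackets {a,b} := ⁅a,b⁆ + κ(a) + λ(b − a) + s on g and {x,y}' := ⁅x,y⁆ + κ'(x) + λ'(y − x) + s' on g'. Then every map φ : g → g' of the form φ(a) = ψ(a) + c with ψ : g → g' linear and c ∈ g', satisfying φ({a,b}) = {φ(a), φ(b)}' for all a, b ∈ g, is either a constant function or injective. -/

import Mathlib

/-- Corollary 3.9: if `g` is a simple Lie algebra, then any homomorphism of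
Lie affgebras from `a(g; k, l, s)` (an affine map preserving the brackets) is
either constant or injective, i.e. `a(g; k, l, s)` is a simple Lie affgebra. -/
theorem simple_fibre_affgebra_hom_const_or_injective
    {F : Type*} [Field F] (h2 : (2 : F) ≠ 0)
    {g : Type*} [LieRing g] [LieAlgebra F g] [LieAlgebra.IsSimple F g]
    {g' : Type*} [LieRing g'] [LieAlgebra F g']
    (k l : g →ₗ[F] g) (k' l' : g' →ₗ[F] g')
    (hkl : ∀ a b : g, l ⁅a, b⁆ = ⁅l a, b⁆ - ⁅a, k b⁆ + ⁅a, l b⁆)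
    (hkl' : ∀ x y : g', l' ⁅x, y⁆ = ⁅l' x, y⁆ - ⁅x, k' y⁆ + ⁅x, l' y⁆)
    (s : g) (s' : g')
    (br : g → g → g)
    (hbr : ∀ a b : g, br a b = ⁅a, b⁆ + k a + l (b - a) + s)
    (br' : g' → g' → g')
    (hbr' : ∀ x y : g', br' x y = ⁅x, y⁆ + k' x + l' (y - x) + s')
    (ψ : g →ₗ[F] g') (c : g') (φ : g → g')
    (hφ : ∀ a : g, φ a = ψ a + c)
    (hhom : ∀ a b : g, φ (br a b) = br' (φ a) (φ b)) :
    (∃ y : g', ∀ a : g, φ a = y) ∨ Function.Injective φ := by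
  have key : ∀ a b : g, ψ ⁅a, b⁆ = ⁅ψ a, ψ b⁆ := by
    intro a b
    have h1 := hhom a b
    have h2 := hhom a 0
    have h3 := hhom 0 b
    have h4 := hhom 0 0
    simp only [hφ, hbr, hbr', map_add, map_sub, map_zero, lie_zero, zero_lie,
      add_lie, lie_add, sub_lie, lie_sub, lie_self, zero_add, add_zero,
      zero_sub, sub_zero, map_neg] at h1 h2 h3 h4
    have hc := congrArg₂ (fun x y : g' => x - y)
      (congrArg₂ (fun x y : g' => x - y) h1 h2) (congrArg₂ (fun x y : g' => x - y) h3 h4)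
    beta_reduce at hc
    abel_nf at hc
    simpa using hc
  let f : g →ₗ⁅F⁆ g' := { ψ with map_lie' := by intro a b; exact key a b }
  rcases LieAlgebra.IsSimple.eq_bot_or_eq_top (R := F) (L := g) f.ker with hk | hk
  · right
    intro a b hab
    have hψ : ψ a = ψ b := by
      rw [hφ a, hφ b] at hab
      exact add_right_cancel hab
    have hz : f (a - b) = 0 := by
      show ψ (a - b) = 0
      rw [map_sub, hψ, sub_self]
    have : a - b ∈ f.ker := LieHom.mem_ker.mpr hz
    rw [hk] at this
    have h0 := (LieSubmodule.mem_bot (a - b)).mp this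
    exact sub_eq_zero.mp h0
  · left
    refine ⟨c, fun a => ?_⟩
    have : a ∈ f.ker := by rw [hk]; trivial
    have h0 : ψ a = 0 := LieHom.mem_ker.mp this
    simp [hφ, h0]
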